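/- Let n₁, n₂, r₁, r₂, d₁, d₂ be positive integers with 1 ≤ d₁ ≤ r₁, 1 ≤ d₂ ≤ r₂, n₁ ≥ 2r₁ − 1, n₂ ≥ 2r₂ − 1, and k₁ = ⌊(n₁−r₁)/d₁⌋ + 1, k₂ = ⌊(n₂−r₂)/d₂⌋ + 1. Let Q_{(i,j)} (1 ≤ i ≤ k₁, 1 ≤ j ≤ k₂) be the 2D patch-and-stride selection matrices, and let P⁽¹⁾ = Σ_{i,p=1}^{k₁} P⁽¹⁾ᵢ(P⁽¹⁾ₚ)ᵀ and P⁽²⁾ = Σ_{j,q=1}^{k₂} P⁽²⁾ⱼ(P⁽²⁾_q)ᵀ be the corresponding 1D patch matrices for parameters (n₁, r₁, d₁) and (n₂, r₂, d₂). Then Q := Σ_{i,p=1}^{k₁} Σ_{j,q=1}^{k₂} Q_{(i,j)}·Q_{(p,q)}ᵀ equals the Kronecker product P⁽¹⁾ ⊗ P⁽²⁾ (under the row-major index bijection {1,…,r₁}×{1,…,r₂} ≅ {1,…,r₁r₂}). -/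

import Mathlib

open Matrix Finset
open scoped Kronecker

noncomputable section

/-- The `i`-th selection matrix of the 1D patch-and-stride structure with image size `n`,
patch size `r` and stride `d` (0-based indices): `(Pᵢ)_{a,b} = 1` iff `b = i·d + a`. -/
def patch1D (n r d : ℕ) (i : Fin ((n - r) / d + 1)) : Matrix (Fin r) (Fin n) ℝ :=
  Matrix.of fun a b => if (b : ℕ) = i.1 * d + a.1 then 1 else 0

/-- The 1D patch matrix `P = ∑_{i,j} Pᵢ Pⱼᵀ`. -/
def patchMat1D (n r d : ℕ) : Matrix (Fin r) (Fin r) ℝ :=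
  ∑ i, ∑ j, patch1D n r d i * (patch1D n r d j)ᵀ

/-- The row-major index bijection `{0,…,m−1} × {0,…,n−1} → {0,…,mn−1}`. -/
def rowMajor (m n : ℕ) (x : Fin m × Fin n) : Fin (m * n) :=
  ⟨x.1.1 * n + x.2.1, by
    have h1 : x.1.1 * n + x.2.1 < x.1.1 * n + n := Nat.add_lt_add_left x.2.2 _
    have h2 : x.1.1 * n + n = (x.1.1 + 1) * n := (Nat.succ_mul _ _).symm
    have h3 : (x.1.1 + 1) * n ≤ m * n := Nat.mul_le_mul_right _ x.1.2
    exact lt_of_lt_of_le (h2 ▸ h1) h3⟩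

/-- The `(i,j)`-th selection matrix of the 2D patch-and-stride structure with image size
`n₁ × n₂`, patch size `r₁ × r₂` and strides `d₁, d₂`, acting on row-major vectorized
images (0-based indices): `(Q_{(i,j)})_{a,b} = 1` iff `a = p·r₂ + q` and
`b = (i·d₁ + p)·n₂ + j·d₂ + q` for some `0 ≤ p < r₁`, `0 ≤ q < r₂`. -/
def patch2D (n₁ n₂ r₁ r₂ d₁ d₂ : ℕ)
    (i : Fin ((n₁ - r₁) / d₁ + 1)) (j : Fin ((n₂ - r₂) / d₂ + 1)) :
    Matrix (Fin (r₁ * r₂)) (Fin (n₁ * n₂)) ℝ :=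
  Matrix.of fun a b =>
    if ∃ p : Fin r₁, ∃ q : Fin r₂, (a : ℕ) = p.1 * r₂ + q.1 ∧
        (b : ℕ) = (i.1 * d₁ + p.1) * n₂ + j.1 * d₂ + q.1 then 1 else 0

/-- The 2D patch matrix `Q = ∑_{i,p} ∑_{j,q} Q_{(i,j)} Q_{(p,q)}ᵀ`. -/
def patchMat2D (n₁ n₂ r₁ r₂ d₁ d₂ : ℕ) : Matrix (Fin (r₁ * r₂)) (Fin (r₁ * r₂)) ℝ :=
  ∑ i, ∑ p, ∑ j, ∑ q,
    patch2D n₁ n₂ r₁ r₂ d₁ d₂ i j * (patch2D n₁ n₂ r₁ r₂ d₁ d₂ p q)ᵀ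

/-- Maximum eigenvalue of a Hermitian (real symmetric) matrix. -/
def lamMax {m : ℕ} (A : Matrix (Fin m) (Fin m) ℝ) (hA : A.IsHermitian) : ℝ :=
  ⨆ i, hA.eigenvalues i

/-- Minimum eigenvalue of a Hermitian (real symmetric) matrix. -/
def lamMin {m : ℕ} (A : Matrix (Fin m) (Fin m) ℝ) (hA : A.IsHermitian) : ℝ :=
  ⨅ i, hA.eigenvalues i

lemma sum_ite_ite {n : ℕ} (x y : ℕ) (hx : x < n) :
    (∑ c : Fin n, (if (c : ℕ) = x then (1 : ℝ) else 0) * (if (c : ℕ) = y then (1 : ℝ) else 0))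
      = if x = y then 1 else 0 := by
  rcases eq_or_ne x y with h | h
  · subst h
    rw [if_pos rfl]
    have key : ∀ c : Fin n,
        (if (c : ℕ) = x then (1 : ℝ) else 0) * (if (c : ℕ) = x then (1 : ℝ) else 0)
          = if c = ⟨x, hx⟩ then 1 else 0 := by
      intro c
      rcases eq_or_ne (c : ℕ) x with h' | h'
      · simp [h', Fin.ext_iff]
      · simp [h', Fin.ext_iff]
    rw [Finset.sum_congr rfl (fun c _ => key c), Finset.sum_ite_eq']
    simp
  · rw [if_neg h]
    apply Finset.sum_eq_zero
    intro c _
    rcases eq_or_ne (c : ℕ) x with h' | h'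
    · have : (c : ℕ) ≠ y := by omega
      simp [this]
    · simp [h']

lemma patchProd1D (n r d : ℕ) (hrn : r ≤ n) (i j : Fin ((n - r) / d + 1)) (a b : Fin r) :
    (patch1D n r d i * (patch1D n r d j)ᵀ) a b
      = if i.1 * d + a.1 = j.1 * d + b.1 then 1 else 0 := by
  have hx : i.1 * d + a.1 < n := by
    have h1 : i.1 * d ≤ ((n - r) / d) * d := Nat.mul_le_mul_right d (Nat.lt_succ_iff.mp i.2)
    have h2 : ((n - r) / d) * d ≤ n - r := Nat.div_mul_le_self _ _
    have := a.2; omega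
  simp only [Matrix.mul_apply, Matrix.transpose_apply, patch1D, Matrix.of_apply]
  exact sum_ite_ite _ _ hx

lemma rowdecomp {n A B C D : ℕ} (hC : C < n) (hD : D < n) :
    A * n + C = B * n + D ↔ A = B ∧ C = D := by
  constructor
  · intro h
    have hn : 0 < n := lt_of_le_of_lt (Nat.zero_le _) hC
    have hCD : C = D := by
      have h1 : (A * n + C) % n = (B * n + D) % n := by rw [h]
      rwa [Nat.mul_comm A n, Nat.mul_comm B n, Nat.mul_add_mod, Nat.mul_add_mod, Nat.mod_eq_of_lt hC, Nat.mod_eq_of_lt hD] at h1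
    have hAB : A * n = B * n := by omega
    exact ⟨Nat.eq_of_mul_eq_mul_right hn hAB, hCD⟩
  · rintro ⟨h1, h2⟩; rw [h1, h2]

lemma patch2D_rowMajor (n₁ n₂ r₁ r₂ d₁ d₂ : ℕ) (hr₂ : 0 < r₂)
    (i : Fin ((n₁ - r₁) / d₁ + 1)) (j : Fin ((n₂ - r₂) / d₂ + 1))
    (x : Fin r₁ × Fin r₂) (b : Fin (n₁ * n₂)) :
    patch2D n₁ n₂ r₁ r₂ d₁ d₂ i j (rowMajor r₁ r₂ x) b
      = if (b : ℕ) = (i.1 * d₁ + x.1.1) * n₂ + j.1 * d₂ + x.2.1 then 1 else 0 := by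
  simp only [patch2D, Matrix.of_apply, rowMajor]
  have key : (∃ p : Fin r₁, ∃ q : Fin r₂, (x.1.1 * r₂ + x.2.1 : ℕ) = p.1 * r₂ + q.1 ∧
      (b : ℕ) = (i.1 * d₁ + p.1) * n₂ + j.1 * d₂ + q.1)
      ↔ (b : ℕ) = (i.1 * d₁ + x.1.1) * n₂ + j.1 * d₂ + x.2.1 := by
    constructor
    · rintro ⟨p, q, h1, h2⟩
      obtain ⟨hp, hq⟩ := (rowdecomp x.2.2 q.2).mp h1
      rw [h2, hp, hq]
    · intro h
      exact ⟨x.1, x.2, rfl, h⟩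
  exact if_congr key rfl rfl

lemma patchProd2D (n₁ n₂ r₁ r₂ d₁ d₂ : ℕ) (hr₁n : r₁ ≤ n₁) (hr₂n : r₂ ≤ n₂) (hr₂ : 0 < r₂)
    (i p : Fin ((n₁ - r₁) / d₁ + 1)) (j q : Fin ((n₂ - r₂) / d₂ + 1)) (a b : Fin r₁ × Fin r₂) :
    (patch2D n₁ n₂ r₁ r₂ d₁ d₂ i j * (patch2D n₁ n₂ r₁ r₂ d₁ d₂ p q)ᵀ)
        (rowMajor r₁ r₂ a) (rowMajor r₁ r₂ b)
      = (if i.1 * d₁ + a.1.1 = p.1 * d₁ + b.1.1 then (1 : ℝ) else 0)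
        * (if j.1 * d₂ + a.2.1 = q.1 * d₂ + b.2.1 then (1 : ℝ) else 0) := by
  have hrow : ∀ (i' : Fin ((n₁ - r₁) / d₁ + 1)) (a' : Fin r₁), i'.1 * d₁ + a'.1 < n₁ := by
    intro i' a'
    have h1 : i'.1 * d₁ ≤ ((n₁ - r₁) / d₁) * d₁ := Nat.mul_le_mul_right d₁ (Nat.lt_succ_iff.mp i'.2)
    have h2 : ((n₁ - r₁) / d₁) * d₁ ≤ n₁ - r₁ := Nat.div_mul_le_self _ _
    have := a'.2; omega
  have hcol : ∀ (j' : Fin ((n₂ - r₂) / d₂ + 1)) (a' : Fin r₂), j'.1 * d₂ + a'.1 < n₂ := by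
    intro j' a'
    have h1 : j'.1 * d₂ ≤ ((n₂ - r₂) / d₂) * d₂ := Nat.mul_le_mul_right d₂ (Nat.lt_succ_iff.mp j'.2)
    have h2 : ((n₂ - r₂) / d₂) * d₂ ≤ n₂ - r₂ := Nat.div_mul_le_self _ _
    have := a'.2; omega
  have hX : (i.1 * d₁ + a.1.1) * n₂ + j.1 * d₂ + a.2.1 < n₁ * n₂ := by
    have h1 : (i.1 * d₁ + a.1.1) * n₂ + (j.1 * d₂ + a.2.1) < (i.1 * d₁ + a.1.1) * n₂ + n₂ :=
      Nat.add_lt_add_left (hcol j a.2) _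
    have h2 : (i.1 * d₁ + a.1.1) * n₂ + n₂ = (i.1 * d₁ + a.1.1 + 1) * n₂ := (Nat.succ_mul _ _).symm
    have h3 : (i.1 * d₁ + a.1.1 + 1) * n₂ ≤ n₁ * n₂ := Nat.mul_le_mul_right _ (hrow i a.1)
    omega
  simp only [Matrix.mul_apply, Matrix.transpose_apply]
  rw [Finset.sum_congr rfl (fun c _ => by
    rw [patch2D_rowMajor n₁ n₂ r₁ r₂ d₁ d₂ hr₂ i j a c,
        patch2D_rowMajor n₁ n₂ r₁ r₂ d₁ d₂ hr₂ p q b c])]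
  rw [sum_ite_ite _ _ hX]
  have hiff : (i.1 * d₁ + a.1.1) * n₂ + j.1 * d₂ + a.2.1
        = (p.1 * d₁ + b.1.1) * n₂ + q.1 * d₂ + b.2.1
      ↔ (i.1 * d₁ + a.1.1 = p.1 * d₁ + b.1.1) ∧ (j.1 * d₂ + a.2.1 = q.1 * d₂ + b.2.1) := by
    have h1 : (i.1 * d₁ + a.1.1) * n₂ + j.1 * d₂ + a.2.1
        = (i.1 * d₁ + a.1.1) * n₂ + (j.1 * d₂ + a.2.1) := by omega
    have h2 : (p.1 * d₁ + b.1.1) * n₂ + q.1 * d₂ + b.2.1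
        = (p.1 * d₁ + b.1.1) * n₂ + (q.1 * d₂ + b.2.1) := by omega
    rw [h1, h2]
    exact rowdecomp (hcol j a.2) (hcol q b.2)
  rw [if_congr hiff rfl rfl]
  by_cases h1 : i.1 * d₁ + a.1.1 = p.1 * d₁ + b.1.1 <;>
    by_cases h2 : j.1 * d₂ + a.2.1 = q.1 * d₂ + b.2.1 <;> simp [h1, h2]

/-- Under the row-major index bijection, the 2D patch matrix
`Q = ∑_{i,p} ∑_{j,q} Q_{(i,j)} Q_{(p,q)}ᵀ` equals the Kronecker product
`P⁽¹⁾ ⊗ P⁽²⁾` of the corresponding 1D patch matrices. -/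
theorem stmt16 (n₁ n₂ r₁ r₂ d₁ d₂ : ℕ)
    (hd₁ : 1 ≤ d₁) (hd₁r : d₁ ≤ r₁) (hr₁n : r₁ ≤ n₁) (hn₁ : 2 * r₁ - 1 ≤ n₁)
    (hd₂ : 1 ≤ d₂) (hd₂r : d₂ ≤ r₂) (hr₂n : r₂ ≤ n₂) (hn₂ : 2 * r₂ - 1 ≤ n₂)
    (a b : Fin r₁ × Fin r₂) :
    patchMat2D n₁ n₂ r₁ r₂ d₁ d₂ (rowMajor r₁ r₂ a) (rowMajor r₁ r₂ b)
      = (patchMat1D n₁ r₁ d₁ ⊗ₖ patchMat1D n₂ r₂ d₂) a b := by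
  have hr₂ : 0 < r₂ := le_trans hd₂ hd₂r
  simp only [patchMat2D, patchMat1D, Matrix.sum_apply, Matrix.kroneckerMap_apply]
  rw [Finset.sum_congr rfl (fun i _ => Finset.sum_congr rfl (fun p _ =>
    Finset.sum_congr rfl (fun j _ => Finset.sum_congr rfl (fun q _ =>
      patchProd2D n₁ n₂ r₁ r₂ d₁ d₂ hr₁n hr₂n hr₂ i p j q a b))))]
  rw [Finset.sum_congr rfl (fun i _ => Finset.sum_congr rfl (fun p _ =>
      patchProd1D n₁ r₁ d₁ hr₁n i p a.1 b.1))]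
  rw [Finset.sum_congr (ι := Fin ((n₂ - r₂) / d₂ + 1)) rfl
      (fun j _ => Finset.sum_congr rfl (fun q _ => patchProd1D n₂ r₂ d₂ hr₂n j q a.2 b.2))]
  simp only [← Finset.mul_sum, ← Finset.sum_mul]
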